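/- Let H ≥ 1 and K ≥ 1 be integers and let v ∈ 𝒱_{H,K} be an H-achievable vector. Then v k ≥ H for every k ∈ Fin K; moreover, if K ≥ 2 then v k > H for every k ∈ Fin K. -/

import Mathlib

open scoped BigOperators

noncomputable section

def simplexInt (K : ℕ) : Set (Fin K → ℝ) :=
  {r | (∀ k, 0 < r k) ∧ ∑ k, r k = 1}

/-- A vector `v` is `(H'+1)`-achievable if there is a bookmaking strategy `Ψ`
such that every decisive bet sequence yields total payout `v k*` on the last bet `k*`. -/
def Achievable (K H' : ℕ) (v : Fin K → ℝ) : Prop :=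
  ∃ Ψ : (h : Fin (H' + 1)) → (Fin h.val → Fin K) → (Fin K → ℝ),
    (∀ h hist, Ψ h hist ∈ simplexInt K) ∧
    ∀ q : Fin (H' + 1) → Fin K,
      (∑ h : Fin (H' + 1),
        if q h = q (Fin.last H')
        then 1 / Ψ h (fun i => q (Fin.castLE h.isLt.le i)) (q (Fin.last H'))
        else 0) = v (q (Fin.last H'))

lemma simplexInt_le_one {K : ℕ} {r : Fin K → ℝ} (hr : r ∈ simplexInt K) (k : Fin K) :
    r k ≤ 1 := by
  obtain ⟨hpos, hsum⟩ := hr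
  calc r k ≤ ∑ j, r j := Finset.single_le_sum (fun j _ => (hpos j).le) (Finset.mem_univ k)
  _ = 1 := hsum

lemma simplexInt_lt_one {K : ℕ} (hK : 2 ≤ K) {r : Fin K → ℝ} (hr : r ∈ simplexInt K)
    (k : Fin K) : r k < 1 := by
  obtain ⟨hpos, hsum⟩ := hr
  obtain ⟨j, hj⟩ : ∃ j : Fin K, j ≠ k := by
    have : 1 < Fintype.card (Fin K) := by rw [Fintype.card_fin]; omega
    exact Fintype.exists_ne_of_one_lt_card this k
  have : r k + r j ≤ ∑ i, r i := by
    have := Finset.add_sum_erase Finset.univ r (Finset.mem_univ k)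
    rw [← this]
    have hjmem : j ∈ Finset.univ.erase k := Finset.mem_erase.mpr ⟨hj, Finset.mem_univ j⟩
    have := Finset.single_le_sum (f := r) (fun i _ => (hpos i).le) hjmem
    linarith
  have := hpos j
  linarith [hsum]

/-- Lower bound on `(H'+1)`-achievable vectors: `v k ≥ H` for all `k`,
with a strict inequality whenever `K ≥ 2`. -/
theorem achievable_lower_bound (K H' : ℕ) (hK : 1 ≤ K) (v : Fin K → ℝ)
    (hv : Achievable K H' v) :
    (∀ k : Fin K, ((H' : ℝ) + 1) ≤ v k) ∧
    (2 ≤ K → ∀ k : Fin K, ((H' : ℝ) + 1) < v k) := by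
  obtain ⟨Ψ, hΨ, hq⟩ := hv
  have key : ∀ k : Fin K, v k = ∑ h : Fin (H' + 1),
      1 / Ψ h (fun _ => k) k := by
    intro k
    have := hq (fun _ => k)
    simp only [if_pos rfl] at this
    exact this.symm
  have pos : ∀ (h : Fin (H' + 1)) (hist : Fin h.val → Fin K) (k : Fin K),
      0 < Ψ h hist k := fun h hist k => (hΨ h hist).1 k
  constructor
  · intro k
    rw [key k]
    calc ((H' : ℝ) + 1) = ∑ _h : Fin (H' + 1), (1 : ℝ) := by simp
    _ ≤ _ := by
        apply Finset.sum_le_sum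
        intro h _
        rw [le_div_iff₀ (pos h _ k), one_mul]
        exact simplexInt_le_one (hΨ h _) k
  · intro hK2 k
    rw [key k]
    calc ((H' : ℝ) + 1) = ∑ _h : Fin (H' + 1), (1 : ℝ) := by simp
    _ < _ := by
        apply Finset.sum_lt_sum_of_nonempty ⟨0, Finset.mem_univ 0⟩
        intro h _
        rw [lt_div_iff₀ (pos h _ k), one_mul]
        exact simplexInt_lt_one hK2 (hΨ h _) k
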